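/- arXiv:2510.00228 — 2 statements merged into one kernel-verified Lean document; each statement's English description precedes it below -/
import Mathlib

section
/- Let n ≥ 5 be an odd integer and let G be a finite ((n-1)/2)-regular simple graph on n vertices. Then both G and its complement graph are radio graceful. -/
open SimpleGraph

/-- A radio labeling of a graph `G`: for all distinct vertices `u, v`,
`|f u - f v| + d(u,v) ≥ diam(G) + 1`. -/
def IsRadioLabeling {V : Type*} (G : SimpleGraph V) (f : V → ℕ) : Prop :=
  ∀ u v : V, u ≠ v →
    (G.diam : ℤ) + 1 ≤ |(f u : ℤ) - (f v : ℤ)| + (G.dist u v : ℤ)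

/-- A graph is radio graceful if it has a radio labeling whose image is exactly
`{1, ..., |V(G)|}`. -/
def RadioGraceful {V : Type*} (G : SimpleGraph V) : Prop :=
  ∃ f : V → ℕ, IsRadioLabeling G f ∧ Set.range f = Set.Icc 1 (Nat.card V)

/-- The antipodal graph of `G`: vertices are adjacent iff their distance in `G`
equals the diameter of `G`. -/
def antipodalGraph {V : Type*} (G : SimpleGraph V) : SimpleGraph V where
  Adj u v := u ≠ v ∧ G.dist u v = G.diam
  symm := ⟨fun u v ⟨h1, h2⟩ => ⟨h1.symm, by rwa [SimpleGraph.dist_comm]⟩⟩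
  loopless := ⟨fun v h => h.1 rfl⟩

/-- A graph is traceable if it has a Hamiltonian path. -/
def Traceable {V : Type*} (G : SimpleGraph V) : Prop :=
  ∃ (u v : V) (p : G.Walk u v), p.IsPath ∧ ∀ w : V, w ∈ p.support

/-- `P` together with its complement forms a bipartition of `G`. -/
def IsBipartition {V : Type*} (G : SimpleGraph V) (P : Set V) : Prop :=
  ∀ u v : V, G.Adj u v → (u ∈ P ↔ v ∉ P)

/-- A graph is bipartite if its vertices can be split into two parts with all
edges between the parts. -/
def Bipartite {V : Type*} (G : SimpleGraph V) : Prop :=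
  ∃ P : Set V, IsBipartition G P

section Aux

open List Finset

variable {V : Type*} [Fintype V] [DecidableEq V]

section Lemmas

variable (G : SimpleGraph V) [DecidableRel G.Adj]

lemma common_nbr (hdeg : ∀ v, Fintype.card V ≤ 2 * G.degree v + 1)
    {u v : V} (hne : u ≠ v) (hna : ¬ G.Adj u v) :
    ∃ w, G.Adj u w ∧ G.Adj v w := by
  by_contra h
  push_neg at h
  have hdisj : Disjoint (G.neighborFinset u) (G.neighborFinset v) := by
    rw [Finset.disjoint_left]
    intro w hwu hwv
    rw [mem_neighborFinset] at hwu hwv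
    exact h w hwu hwv
  have hsub : G.neighborFinset u ∪ G.neighborFinset v ⊆ Finset.univ \ {u, v} := by
    intro w hw
    simp only [Finset.mem_sdiff, Finset.mem_univ, Finset.mem_insert, Finset.mem_singleton,
      true_and]
    rcases Finset.mem_union.mp hw with hw' | hw' <;> rw [mem_neighborFinset] at hw'
    · rintro (rfl | rfl)
      · exact G.irrefl hw'
      · exact hna hw'
    · rintro (rfl | rfl)
      · exact hna hw'.symm
      · exact G.irrefl hw'
  have hc1 := Finset.card_le_card hsub
  rw [Finset.card_union_of_disjoint hdisj, card_neighborFinset_eq_degree,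
    card_neighborFinset_eq_degree, Finset.card_sdiff_of_subset (by simp [Finset.insert_subset_iff])] at hc1
  have hcp : ({u, v} : Finset V).card = 2 := by
    rw [Finset.card_insert_of_notMem (by simpa using hne), Finset.card_singleton]
  rw [Finset.card_univ, hcp] at hc1
  have h1 := hdeg u
  have h2 := hdeg v
  have h5 : 2 ≤ Fintype.card V := Fintype.one_lt_card_iff_nontrivial.mpr ⟨u, v, hne⟩
  omega

end Lemmas

lemma chain'_rotate {R : V → V → Prop} {p q : List V} {y : V}
    (hch : (p ++ y :: q).IsChain R)
    (hcl : R ((p ++ y :: q).getLast (by simp)) ((p ++ y :: q).head (by simp))) :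
    ((y :: q) ++ p).IsChain R := by
  obtain ⟨hp, hyq, -⟩ := List.isChain_append.mp hch
  rw [List.isChain_append]
  refine ⟨hyq, hp, ?_⟩
  intro a ha b hb
  rcases List.eq_nil_or_concat p with rfl | ⟨p', z, rfl⟩
  · simp at hb
  · simp only [List.concat_eq_append] at *
    have hpne : p' ++ [z] ≠ [] := by simp
    rw [List.getLast?_eq_getLast (by simp), Option.mem_some_iff] at ha
    rw [List.head?_eq_head hpne, Option.mem_some_iff] at hb
    subst ha; subst hb
    have h1 : ((p' ++ [z]) ++ y :: q).getLast (by simp) = (y :: q).getLast (by simp) := by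
      rw [List.getLast_append]; simp
    have h2 : ((p' ++ [z]) ++ y :: q).head (by simp) = (p' ++ [z]).head hpne := by
      rw [List.head_append]; simp
    rw [h1, h2] at hcl
    exact hcl

set_option linter.unusedSectionVars false

section Extend

variable (G : SimpleGraph V) [DecidableRel G.Adj]

lemma extend_path (hdeg : ∀ v, Fintype.card V ≤ 2 * G.degree v + 1)
    (l : List V) (hnd : l.Nodup) (hch : l.IsChain G.Adj) (hne : l ≠ [])
    (hlt : l.length < Fintype.card V) :
    ∃ l' : List V, l'.Nodup ∧ l'.IsChain G.Adj ∧ l'.length = l.length + 1 := by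
  by_cases hex : ∃ x, x ∉ l ∧ G.Adj x (l.head hne)
  · obtain ⟨x, hx, hadj⟩ := hex
    refine ⟨x :: l, List.nodup_cons.mpr ⟨hx, hnd⟩, List.isChain_cons.mpr ⟨?_, hch⟩, by simp⟩
    intro b hb
    rw [List.head?_eq_head hne, Option.mem_some_iff] at hb
    exact hb ▸ hadj
  by_cases hex2 : ∃ x, x ∉ l ∧ G.Adj (l.getLast hne) x
  · obtain ⟨x, hx, hadj⟩ := hex2
    refine ⟨l ++ [x], ?_, ?_, by simp⟩
    · rw [List.nodup_append]
      exact ⟨hnd, List.nodup_singleton x, fun a ha b hb hab => hx (by rw [List.mem_singleton] at hb; rw [← hb, ← hab]; exact ha)⟩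
    · rw [List.isChain_append]
      refine ⟨hch, List.isChain_singleton x, ?_⟩
      intro a ha b hb
      rw [List.getLast?_eq_getLast hne, Option.mem_some_iff] at ha
      simp only [List.head?_cons, Option.mem_some_iff] at hb
      exact ha ▸ hb ▸ hadj
  push_neg at hex hex2
  have h1 : ∀ x, G.Adj x (l.head hne) → x ∈ l := fun x hx => by
    by_contra hc; exact (hex x hc) hx
  have h2 : ∀ x, G.Adj (l.getLast hne) x → x ∈ l := fun x hx => by
    by_contra hc; exact (hex2 x hc) hx
  -- abbreviations
  set a := l.head hne with ha_def
  set b := l.getLast hne with hb_def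
  set k := l.length with hk_def
  have hkpos : 0 < k := List.length_pos_iff.mpr hne
  have hcard2 : 2 ≤ Fintype.card V := by omega
  -- length ≥ 2
  have hk2 : 2 ≤ k := by
    by_contra hk1
    have hkeq : k = 1 := by omega
    obtain ⟨z, hz⟩ := List.length_eq_one_iff.mp hkeq
    have haz : a = z := by simp [ha_def, hz]
    have hdega : 1 ≤ G.degree a := by have := hdeg a; omega
    obtain ⟨x, hx⟩ := (G.degree_pos_iff_exists_adj a).mp hdega
    have := h1 x hx.symm
    rw [hz, List.mem_singleton] at this
    exact G.irrefl (this ▸ haz ▸ hx)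
  have ha0 : a = l[0]'(by omega) := List.head_eq_getElem hne
  have hbk : b = l[k-1]'(by omega) := List.getLast_eq_getElem hne
  have hab : a ≠ b := by
    intro h
    rw [ha0, hbk, hnd.getElem_inj_iff] at h
    omega
  -- index sets
  set A : Finset ℕ := (G.neighborFinset a).image (fun x => l.idxOf x) with hA_def
  set B : Finset ℕ := (G.neighborFinset b).image (fun x => l.idxOf x + 1) with hB_def
  have hinj : Set.InjOn (fun x => l.idxOf x) {x | x ∈ l} := by
    intro x hx y hy hxy
    simp only at hxy
    have hx' : l.idxOf x < l.length := List.idxOf_lt_length_iff.mpr hx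
    have hy' : l.idxOf y < l.length := List.idxOf_lt_length_iff.mpr hy
    calc x = l[l.idxOf x] := (List.getElem_idxOf hx').symm
    _ = l[l.idxOf y] := by congr 1
    _ = y := List.getElem_idxOf hy'
  have hmemA : ∀ x ∈ G.neighborFinset a, x ∈ l := by
    intro x hx
    rw [SimpleGraph.mem_neighborFinset] at hx
    exact h1 x hx.symm
  have hmemB : ∀ x ∈ G.neighborFinset b, x ∈ l := by
    intro x hx
    rw [SimpleGraph.mem_neighborFinset] at hx
    exact h2 x hx
  have hcardA : A.card = G.degree a := by
    rw [hA_def, Finset.card_image_of_injOn (fun x hx y hy => hinj (hmemA x hx) (hmemA y hy)),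
      SimpleGraph.card_neighborFinset_eq_degree]
  have hcardB : B.card = G.degree b := by
    rw [hB_def, ← SimpleGraph.card_neighborFinset_eq_degree]
    apply Finset.card_image_of_injOn
    intro x hx y hy hxy
    simp only [add_left_inj] at hxy
    exact hinj (hmemB x hx) (hmemB y hy) hxy
  have hsubA : A ⊆ Finset.Icc 1 (k-1) := by
    intro i hi
    rw [hA_def, Finset.mem_image] at hi
    obtain ⟨x, hx, rfl⟩ := hi
    have hxl : x ∈ l := hmemA x hx
    have hlt' : l.idxOf x < k := List.idxOf_lt_length_iff.mpr hxl
    rw [SimpleGraph.mem_neighborFinset] at hx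
    have hne0 : l.idxOf x ≠ 0 := by
      intro h0
      have : x = l[0]'(by omega) := by
        conv_lhs => rw [← List.getElem_idxOf hlt']
        congr 1
      exact G.irrefl (ha0 ▸ this ▸ hx)
    rw [Finset.mem_Icc]
    omega
  have hsubB : B ⊆ Finset.Icc 1 (k-1) := by
    intro i hi
    rw [hB_def, Finset.mem_image] at hi
    obtain ⟨x, hx, rfl⟩ := hi
    have hxl : x ∈ l := hmemB x hx
    have hlt' : l.idxOf x < k := List.idxOf_lt_length_iff.mpr hxl
    rw [SimpleGraph.mem_neighborFinset] at hx
    have hnek : l.idxOf x ≠ k - 1 := by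
      intro h0
      have : x = l[k-1]'(by omega) := by
        conv_lhs => rw [← List.getElem_idxOf hlt']
        congr 1
      exact G.irrefl (hbk ▸ this ▸ hx)
    rw [Finset.mem_Icc]
    omega
  have hdega := hdeg a
  have hdegb := hdeg b
  have hiAB : (A ∩ B).Nonempty := by
    rw [← Finset.card_pos]
    have hu := Finset.card_union_add_card_inter A B
    have hUsub : A ∪ B ⊆ Finset.Icc 1 (k-1) := Finset.union_subset hsubA hsubB
    have hU := Finset.card_le_card hUsub
    rw [Nat.card_Icc] at hU
    omega
  obtain ⟨i, hi⟩ := hiAB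
  rw [Finset.mem_inter] at hi
  obtain ⟨hiA, hiB⟩ := hi
  have hi1 : 1 ≤ i := (Finset.mem_Icc.mp (hsubA hiA)).1
  have hik : i ≤ k - 1 := (Finset.mem_Icc.mp (hsubA hiA)).2
  have hik' : i < k := by omega
  have hadj_ai : G.Adj a (l[i]'(by omega)) := by
    rw [hA_def, Finset.mem_image] at hiA
    obtain ⟨x, hx, hxi⟩ := hiA
    have hxl : x ∈ l := hmemA x hx
    have hlt' : l.idxOf x < k := List.idxOf_lt_length_iff.mpr hxl
    rw [SimpleGraph.mem_neighborFinset] at hx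
    have : l[i]'(by omega) = x := by
      subst hxi
      exact List.getElem_idxOf hlt'
    rw [this]
    exact hx
  have hadj_bi : G.Adj b (l[i-1]'(by omega)) := by
    rw [hB_def, Finset.mem_image] at hiB
    obtain ⟨x, hx, hxi⟩ := hiB
    have hxl : x ∈ l := hmemB x hx
    have hlt' : l.idxOf x < k := List.idxOf_lt_length_iff.mpr hxl
    rw [SimpleGraph.mem_neighborFinset] at hx
    have : l[i-1]'(by omega) = x := by
      have hieq : i - 1 = l.idxOf x := by omega
      simp only [hieq]
      exact List.getElem_idxOf hlt'
    rw [this]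
    exact hx
  -- build the cycle c
  set c : List V := l.drop i ++ (l.take i).reverse with hc_def
  have hdne : l.drop i ≠ [] := by
    apply List.ne_nil_of_length_pos
    rw [List.length_drop]
    omega
  have htne : l.take i ≠ [] := by
    apply List.ne_nil_of_length_pos
    rw [List.length_take]
    omega
  have htrne : (l.take i).reverse ≠ [] := by simpa using htne
  have hcne : c ≠ [] := by simp [hc_def, hdne]
  have hperm : c ~ l := by
    calc c ~ l.drop i ++ l.take i := (List.reverse_perm (l.take i)).append_left _
    _ ~ l.take i ++ l.drop i := List.perm_append_comm
    _ = l := List.take_append_drop i l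
  have hndc : c.Nodup := hperm.symm.nodup hnd
  have hlenc : c.length = k := hperm.length_eq
  have hmemc : ∀ v, v ∈ c ↔ v ∈ l := fun v => hperm.mem_iff
  have hheadc : c.head hcne = l[i]'(by omega) := by
    simp only [hc_def]
    rw [List.head_append _, dif_neg (by simpa using hdne)]
    exact List.head_drop hdne
  have hlastc : c.getLast hcne = a := by
    simp only [hc_def]
    rw [List.getLast_append _, dif_neg (by simpa using htrne)]
    rw [List.getLast_reverse htrne]
    rw [List.head_eq_getElem, List.getElem_take, ha0]
  have hflip : flip G.Adj = G.Adj := by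
    ext x y
    exact G.adj_comm y x
  have hchc : c.IsChain G.Adj := by
    rw [hc_def, List.isChain_append]
    refine ⟨hch.drop i, ?_, ?_⟩
    · rw [List.isChain_reverse, show (fun a b => G.Adj b a) = G.Adj from hflip]
      exact hch.take i
    · intro p hp q hq
      rw [List.getLast?_eq_getLast hdne, Option.mem_some_iff] at hp
      rw [List.head?_eq_head htrne, Option.mem_some_iff] at hq
      have hp' : p = b := by rw [← hp, List.getLast_drop]
      have hq' : q = l[i-1]'(by omega) := by
        rw [← hq, List.head_reverse, List.getLast_eq_getElem, List.getElem_take]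
        simp only [List.length_take, Nat.min_eq_left (show i ≤ l.length by omega)]
      rw [hp', hq']
      exact hadj_bi
  have hclosure : G.Adj (c.getLast hcne) (c.head hcne) := by
    rw [hlastc, hheadc]
    exact hadj_ai
  -- find a vertex outside c adjacent to a vertex in c
  have hxout : ∃ x, x ∉ c := by
    by_contra hall
    push_neg at hall
    have : Finset.univ ⊆ c.toFinset := fun v _ => List.mem_toFinset.mpr (hall v)
    have hcard := Finset.card_le_card this
    rw [Finset.card_univ, List.toFinset_card_of_nodup hndc, hlenc] at hcard
    omega
  obtain ⟨x₀, hx₀⟩ := hxout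
  have hedge : ∃ x y, x ∉ c ∧ y ∈ c ∧ G.Adj x y := by
    have huc : c.head hcne ∈ c := List.head_mem hcne
    have hx0u : x₀ ≠ c.head hcne := fun h => hx₀ (h ▸ huc)
    by_cases hadj : G.Adj x₀ (c.head hcne)
    · exact ⟨x₀, c.head hcne, hx₀, huc, hadj⟩
    · obtain ⟨w, hw1, hw2⟩ := common_nbr G hdeg hx0u hadj
      by_cases hwc : w ∈ c
      · exact ⟨x₀, w, hx₀, hwc, hw1⟩
      · exact ⟨w, c.head hcne, hwc, huc, hw2.symm⟩
  obtain ⟨x, y, hxc, hyc, hxy⟩ := hedge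
  obtain ⟨p, q, hpq⟩ := List.append_of_mem hyc
  refine ⟨x :: ((y :: q) ++ p), ?_, ?_, ?_⟩
  · rw [List.nodup_cons]
    constructor
    · intro hmem
      apply hxc
      rw [hpq]
      exact List.perm_append_comm.mem_iff.mp hmem
    · have hpm : (y :: q) ++ p ~ c := by rw [hpq]; exact List.perm_append_comm
      exact hpm.symm.nodup hndc
  · rw [List.isChain_cons]
    constructor
    · intro z hz
      rw [List.head?_eq_head (by simp), Option.mem_some_iff] at hz
      have hyy : ((y :: q) ++ p).head (by simp) = y := by
        rw [List.head_append _, dif_neg (by simp)]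
        simp
      rw [← hz, hyy]
      exact hxy
    · apply chain'_rotate
      · rw [← hpq]; exact hchc
      · have hcl2 := hclosure
        simp only [hc_def] at hpq hcl2
        simp only [hpq] at hcl2
        exact hcl2
  · have : ((y :: q) ++ p).length = c.length := by
      rw [hpq]; simp; omega
    simp only [List.length_cons, this, hlenc]

end Extend

section Ham

variable (G : SimpleGraph V) [DecidableRel G.Adj]

lemma exists_ham_list (hdeg : ∀ v, Fintype.card V ≤ 2 * G.degree v + 1) [Nonempty V] :
    ∃ l : List V, l.Nodup ∧ l.IsChain G.Adj ∧ ∀ v, v ∈ l := by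
  have key : ∀ m (l : List V), l.Nodup → l.IsChain G.Adj → l ≠ [] →
      l.length + m = Fintype.card V →
      ∃ l' : List V, l'.Nodup ∧ l'.IsChain G.Adj ∧ l'.length = Fintype.card V := by
    intro m
    induction m with
    | zero => exact fun l h1 h2 h3 h4 => ⟨l, h1, h2, by omega⟩
    | succ m ih =>
      intro l h1 h2 h3 h4
      obtain ⟨l', h1', h2', h3'⟩ := extend_path G hdeg l h1 h2 h3 (by omega)
      exact ih l' h1' h2' (List.ne_nil_of_length_pos (by omega)) (by omega)
  obtain ⟨v⟩ := ‹Nonempty V›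
  have hc1 : 1 ≤ Fintype.card V := Fintype.card_pos
  obtain ⟨l, hnd, hch, hlen⟩ := key (Fintype.card V - 1) [v] (List.nodup_singleton v)
    (List.isChain_singleton v) (by simp) (by simp; omega)
  have huniv : l.toFinset = Finset.univ :=
    Finset.eq_univ_of_card _ (by rw [List.toFinset_card_of_nodup hnd, hlen])
  exact ⟨l, hnd, hch, fun w => List.mem_toFinset.mp (huniv ▸ Finset.mem_univ w)⟩

lemma dist_pos_aux (hdeg : ∀ v, Fintype.card V ≤ 2 * G.degree v + 1)
    {u v : V} (hne : u ≠ v) : 1 ≤ G.dist u v ∧ G.Reachable u v := by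
  have hreach : G.Reachable u v := by
    by_cases hadj : G.Adj u v
    · exact hadj.reachable
    · obtain ⟨w, hw1, hw2⟩ := common_nbr G hdeg hne hadj
      exact hw1.reachable.trans hw2.reachable.symm
  refine ⟨?_, hreach⟩
  by_contra h
  have h0 : G.dist u v = 0 := by omega
  exact hne (hreach.dist_eq_zero_iff.mp h0)

lemma dist_eq_two_aux (hdeg : ∀ v, Fintype.card V ≤ 2 * G.degree v + 1)
    {u v : V} (hne : u ≠ v) (hna : ¬G.Adj u v) : G.dist u v = 2 := by
  obtain ⟨w, hw1, hw2⟩ := common_nbr G hdeg hne hna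
  have hle : G.dist u v ≤ 2 := by
    have := SimpleGraph.dist_le (Walk.cons hw1 (Walk.cons hw2.symm Walk.nil))
    simpa using this
  have h1 := (dist_pos_aux G hdeg hne).1
  have hne1 : G.dist u v ≠ 1 := fun h => hna (SimpleGraph.dist_eq_one_iff_adj.mp h)
  omega

lemma diam_eq_two_aux (hdeg : ∀ v, Fintype.card V ≤ 2 * G.degree v + 1)
    (hpair : ∃ u v, u ≠ v ∧ ¬G.Adj u v) [Nonempty V] : G.diam = 2 := by
  have hdle : ∀ u v : V, G.dist u v ≤ 2 := by
    intro u v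
    by_cases hne : u = v
    · subst hne; rw [SimpleGraph.dist_self]; omega
    by_cases hadj : G.Adj u v
    · rw [SimpleGraph.dist_eq_one_iff_adj.mpr hadj]; omega
    · rw [dist_eq_two_aux G hdeg hne hadj]
  have hetop : G.ediam ≠ ⊤ := by
    obtain ⟨a, b, hab⟩ := SimpleGraph.exists_edist_eq_ediam_of_finite (G := G)
    rw [← hab, SimpleGraph.edist_ne_top_iff_reachable]
    by_cases hne : a = b
    · subst hne; rfl
    · exact (dist_pos_aux G hdeg hne).2
  apply Nat.le_antisymm
  · obtain ⟨u, v, huv⟩ := SimpleGraph.exists_dist_eq_diam (G := G)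
    rw [← huv]
    exact hdle u v
  · obtain ⟨u, v, hne, hna⟩ := hpair
    have := SimpleGraph.dist_le_diam hetop (u := u) (v := v)
    rw [dist_eq_two_aux G hdeg hne hna] at this
    exact this

lemma exists_nonadj (u : V) (hdeg2 : G.degree u + 1 < Fintype.card V) :
    ∃ v, u ≠ v ∧ ¬G.Adj u v := by
  by_contra h
  push_neg at h
  have hsub : Finset.univ ⊆ insert u (G.neighborFinset u) := by
    intro v _
    by_cases hv : u = v
    · simp [hv]
    · exact Finset.mem_insert_of_mem (G.mem_neighborFinset u v |>.mpr (h v hv))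
  have := Finset.card_le_card hsub
  rw [Finset.card_univ] at this
  have hins := Finset.card_insert_le u (G.neighborFinset u)
  rw [SimpleGraph.card_neighborFinset_eq_degree] at hins
  omega

end Ham

section Radio

variable (G : SimpleGraph V) [DecidableRel G.Adj]

lemma radio_main (hdiam : G.diam = 2)
    (hd1 : ∀ u v : V, u ≠ v → 1 ≤ G.dist u v)
    (hd2 : ∀ u v : V, u ≠ v → ¬G.Adj u v → G.dist u v = 2)
    (l : List V) (hnd : l.Nodup) (hch : l.IsChain Gᶜ.Adj) (hall : ∀ v, v ∈ l) :
    RadioGraceful G := by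
  have hlen : l.length = Fintype.card V := by
    rw [← List.toFinset_card_of_nodup hnd, ← Finset.card_univ]
    congr 1
    exact Finset.eq_univ_of_forall (fun v => List.mem_toFinset.mpr (hall v))
  refine ⟨fun v => l.idxOf v + 1, ?_, ?_⟩
  · intro u v huv
    have hiu : l.idxOf u < l.length := List.idxOf_lt_length_iff.mpr (hall u)
    have hiv : l.idxOf v < l.length := List.idxOf_lt_length_iff.mpr (hall v)
    have hne_idx : l.idxOf u ≠ l.idxOf v := by
      intro h
      apply huv
      calc u = l[l.idxOf u] := (List.getElem_idxOf hiu).symm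
      _ = l[l.idxOf v] := by congr 1
      _ = v := List.getElem_idxOf hiv
    rw [hdiam]
    have hchain := List.isChain_iff_getElem.mp hch
    by_cases hcons : l.idxOf u = l.idxOf v + 1 ∨ l.idxOf v = l.idxOf u + 1
    · -- consecutive: complement-adjacent, so distance 2 in G
      have hcadj : Gᶜ.Adj u v := by
        rcases hcons with h | h
        · have := hchain (l.idxOf v) (by omega)
          rw [List.getElem_idxOf hiv] at this
          have h2 : l[l.idxOf v + 1]'(by omega) = u := by
            simp only [← h]
            exact List.getElem_idxOf hiu
          rw [h2] at this
          exact this.symm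
        · have := hchain (l.idxOf u) (by omega)
          rw [List.getElem_idxOf hiu] at this
          have h2 : l[l.idxOf u + 1]'(by omega) = v := by
            simp only [← h]
            exact List.getElem_idxOf hiv
          rw [h2] at this
          exact this
      have hna : ¬G.Adj u v := ((SimpleGraph.compl_adj G u v).mp hcadj).2
      have hdist : (G.dist u v : ℤ) = 2 := by exact_mod_cast hd2 u v huv hna
      push_cast
      rcases abs_cases ((l.idxOf u : ℤ) + 1 - ((l.idxOf v : ℤ) + 1)) with ⟨heq, _⟩ | ⟨heq, _⟩ <;>
        · rw [heq]
          omega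
    · push_neg at hcons
      have hdist : (1 : ℤ) ≤ (G.dist u v : ℤ) := by exact_mod_cast hd1 u v huv
      obtain ⟨hc1, hc2⟩ := hcons
      push_cast
      rcases abs_cases ((l.idxOf u : ℤ) + 1 - ((l.idxOf v : ℤ) + 1)) with ⟨heq, _⟩ | ⟨heq, _⟩ <;>
        · rw [heq]
          omega
  · ext m
    simp only [Set.mem_range, Set.mem_Icc]
    rw [Nat.card_eq_fintype_card]
    constructor
    · rintro ⟨v, rfl⟩
      have := List.idxOf_lt_length_iff.mpr (hall v)
      omega
    · rintro ⟨h1, h2⟩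
      have hm : m - 1 < l.length := by omega
      refine ⟨l[m-1], ?_⟩
      rw [hnd.idxOf_getElem]
      omega

end Radio

theorem radioGraceful_self_and_compl_of_half_regular'
    {W : Type*} [Fintype W] (G : SimpleGraph W) [DecidableRel G.Adj]
    (n : ℕ) (hn : 5 ≤ n) (hodd : Odd n) (hcard : Fintype.card W = n)
    (hreg : G.IsRegularOfDegree ((n - 1) / 2)) :
    RadioGraceful G ∧ RadioGraceful Gᶜ := by
  classical
  have hnonempty : Nonempty W := by
    rw [← Fintype.card_pos_iff, hcard]; omega
  obtain ⟨m, hm⟩ := hodd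
  have hm2 : (n - 1) / 2 = m := by omega
  have hdegG : ∀ v, Fintype.card W ≤ 2 * G.degree v + 1 := by
    intro v
    rw [hcard, hreg v, hm2]
    omega
  have hregc : Gᶜ.IsRegularOfDegree ((n - 1) / 2) := by
    have h := hreg.compl
    rw [hcard] at h
    rw [show n - 1 - (n - 1) / 2 = (n - 1) / 2 from by omega] at h
    exact h
  have hdegGc : ∀ v, Fintype.card W ≤ 2 * Gᶜ.degree v + 1 := by
    intro v
    rw [hcard, hregc v, hm2]
    omega
  have hpairG : ∃ u v, u ≠ v ∧ ¬G.Adj u v := by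
    obtain ⟨u⟩ := hnonempty
    obtain ⟨v, h1, h2⟩ := exists_nonadj G u (by rw [hreg u, hcard]; omega)
    exact ⟨u, v, h1, h2⟩
  have hpairGc : ∃ u v, u ≠ v ∧ ¬Gᶜ.Adj u v := by
    obtain ⟨u⟩ := hnonempty
    obtain ⟨v, h1, h2⟩ := exists_nonadj Gᶜ u (by rw [hregc u, hcard]; omega)
    exact ⟨u, v, h1, h2⟩
  have hdiamG := diam_eq_two_aux G hdegG hpairG
  have hdiamGc := diam_eq_two_aux Gᶜ hdegGc hpairGc
  obtain ⟨l1, hnd1, hch1, hall1⟩ := exists_ham_list Gᶜ hdegGc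
  obtain ⟨l2, hnd2, hch2, hall2⟩ := exists_ham_list G hdegG
  constructor
  · exact radio_main G hdiamG (fun u v h => (dist_pos_aux G hdegG h).1)
      (fun u v h hna => dist_eq_two_aux G hdegG h hna) l1 hnd1 hch1 hall1
  · exact radio_main Gᶜ hdiamGc (fun u v h => (dist_pos_aux Gᶜ hdegGc h).1)
      (fun u v h hna => dist_eq_two_aux Gᶜ hdegGc h hna) l2 hnd2
      (by rw [compl_compl]; exact hch2) hall2

end Aux

theorem radioGraceful_self_and_compl_of_half_regular
    {V : Type*} [Fintype V] (G : SimpleGraph V) [DecidableRel G.Adj]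
    (n : ℕ) (hn : 5 ≤ n) (hodd : Odd n) (hcard : Fintype.card V = n)
    (hreg : G.IsRegularOfDegree ((n - 1) / 2)) :
    RadioGraceful G ∧ RadioGraceful Gᶜ :=
  radioGraceful_self_and_compl_of_half_regular' G n hn hodd hcard hreg
end

section
/- For every m ≥ 5, the complement of the cycle graph C_m is radio graceful, and for every n ≥ 5, the complement of the path graph P_n is radio graceful. -/
open SimpleGraph

lemma radioGraceful_aux {V : Type*} [Fintype V] (G : SimpleGraph V)
    (hmid : ∀ u v : V, u ≠ v → ¬G.Adj u v → ∃ w, G.Adj u w ∧ G.Adj w v)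
    (f : V → ℕ) (hrange : Set.range f = Set.Icc 1 (Nat.card V))
    (hinj : Function.Injective f)
    (hcons : ∀ u v : V, f u + 1 = f v → ¬ G.Adj u v) :
    RadioGraceful G := by
  have hedist : ∀ u v : V, G.edist u v ≤ 2 := by
    intro u v
    rcases eq_or_ne u v with rfl | huv
    · simp
    rcases em (G.Adj u v) with h | h
    · rw [edist_eq_one_iff_adj.mpr h]; norm_num
    · obtain ⟨w, h1, h2⟩ := hmid u v huv h
      calc G.edist u v ≤ G.edist u w + G.edist w v := SimpleGraph.edist_triangle
        _ ≤ 2 := by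
          rw [edist_eq_one_iff_adj.mpr h1, edist_eq_one_iff_adj.mpr h2]; norm_num
  have hdiam : G.diam ≤ 2 := by
    have h := ediam_le_of_edist_le hedist
    have := ENat.toNat_le_toNat h (by norm_num)
    simpa [SimpleGraph.diam] using this
  have hdist1 : ∀ u v : V, u ≠ v → 1 ≤ G.dist u v := by
    intro u v h
    have h1 := G.edist_pos_of_ne h
    have h2 := hedist u v
    have : G.dist u v = (G.edist u v).toNat := rfl
    rw [this]
    have hne : G.edist u v ≠ ⊤ := by
      intro ht; rw [ht] at h2; norm_num at h2
    lift G.edist u v to ℕ using hne with d hd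
    simp only [ENat.toNat_coe]
    exact_mod_cast h1
  refine ⟨f, ?_, hrange⟩
  intro u v huv
  have hfne : f u ≠ f v := fun h => huv (hinj h)
  have hd1 : 1 ≤ G.dist u v := hdist1 u v huv
  rcases lt_or_ge 1 (|(f u : ℤ) - (f v : ℤ)|) with hgt | hle
  · have : (G.diam : ℤ) ≤ 2 := by exact_mod_cast hdiam
    have : (1 : ℤ) ≤ G.dist u v := by exact_mod_cast hd1
    omega
  · have habs : |(f u : ℤ) - (f v : ℤ)| = 1 := by
      have : (f u : ℤ) ≠ f v := by exact_mod_cast hfne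
      rcases abs_cases ((f u : ℤ) - f v) with ⟨h1, h2⟩ | ⟨h1, h2⟩ <;> omega
    have hnadj : ¬ G.Adj u v := by
      have : f u + 1 = f v ∨ f v + 1 = f u := by
        rcases abs_cases ((f u : ℤ) - f v) with ⟨h1, h2⟩ | ⟨h1, h2⟩ <;> omega
      rcases this with h | h
      · exact hcons u v h
      · exact fun ha => hcons v u h ha.symm
    have hd2 : 2 ≤ G.dist u v := by
      have : G.dist u v ≠ 1 := fun h => hnadj (dist_eq_one_iff_adj.mp h)
      omega
    have : (G.diam : ℤ) ≤ 2 := by exact_mod_cast hdiam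
    have : (2 : ℤ) ≤ G.dist u v := by exact_mod_cast hd2
    omega

open Fin.NatCast in
lemma finNe (k c : ℕ) (h1 : 0 < c) (h2 : c < k + 5) : ((c : ℕ) : Fin (k+5)) ≠ 0 := by
  intro h
  apply_fun Fin.val at h
  rw [Fin.val_natCast, Nat.mod_eq_of_lt h2] at h
  simp at h
  omega

open Fin.NatCast in
lemma finNe' (k c : ℕ) (h1 : 0 < c) (h2 : c < k + 5) (a b : Fin (k+5))
    (h : a - b = ((c : ℕ) : Fin (k+5))) : a ≠ b := by
  rintro rfl
  rw [sub_self] at h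
  exact finNe k c h1 h2 h.symm

lemma valOne (k : ℕ) (x : Fin (k+5)) : x.val = 1 ↔ x = 1 := by
  rw [Fin.ext_iff, Fin.val_one', Nat.mod_eq_of_lt (show (1:ℕ) < k+5 by omega)]

lemma finAddOne (k : ℕ) (u v : Fin (k+5)) (h : u.val + 1 = v.val) : v - u = 1 := by
  rw [Fin.ext_iff, Fin.sub_def]
  simp only [Fin.val_one', Nat.mod_eq_of_lt (show (1:ℕ) < k+5 by omega)]
  have hv := v.isLt
  have : k + 5 - u.val + v.val = (k+5) + 1 := by omega
  simp only [this, Nat.add_mod_left, Nat.mod_eq_of_lt (show (1:ℕ) < k+5 by omega)]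

lemma cycAdj (k : ℕ) (u v : Fin (k+5)) :
    (cycleGraph (k+5)).Adj u v ↔ (u - v = 1 ∨ v - u = 1) := by
  rw [cycleGraph_adj', valOne, valOne]

lemma rangeSucc (k : ℕ) :
    Set.range (fun i : Fin (k+5) => i.val + 1) = Set.Icc 1 (Nat.card (Fin (k+5))) := by
  rw [Nat.card_eq_fintype_card, Fintype.card_fin]
  ext x
  simp only [Set.mem_range, Set.mem_Icc]
  constructor
  · rintro ⟨i, rfl⟩
    have := i.isLt
    omega
  · rintro ⟨h1, h2⟩
    exact ⟨⟨x - 1, by omega⟩, by simp; omega⟩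

open Fin.NatCast Fin.CommRing in
lemma cycMid (k : ℕ) : ∀ u v : Fin (k+5), u ≠ v → ¬(cycleGraph (k+5))ᶜ.Adj u v →
    ∃ w, (cycleGraph (k+5))ᶜ.Adj u w ∧ (cycleGraph (k+5))ᶜ.Adj w v := by
  have claim : ∀ u v : Fin (k+5), v - u = 1 →
      ∃ w, (cycleGraph (k+5))ᶜ.Adj u w ∧ (cycleGraph (k+5))ᶜ.Adj w v := by
    intro u v h
    have hv : v = 1 + u := sub_eq_iff_eq_add.mp h
    refine ⟨u + 3, ⟨?_, ?_⟩, ?_, ?_⟩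
    · exact (finNe' k 3 (by omega) (by omega) (u+3) u (by push_cast; ring)).symm
    · rw [cycAdj]
      rintro (h' | h')
      · exact finNe' k 4 (by omega) (by omega) 1 (u - (u+3)) (by push_cast; ring) h'.symm
      · exact finNe' k 2 (by omega) (by omega) ((u+3) - u) 1 (by push_cast; ring) h'
    · subst hv
      exact finNe' k 2 (by omega) (by omega) (u+3) (1+u) (by push_cast; ring)
    · subst hv
      rw [cycAdj]
      rintro (h' | h')
      · exact finNe' k 1 (by omega) (by omega) ((u+3) - (1+u)) 1 (by push_cast; ring) h'
      · exact finNe' k 3 (by omega) (by omega) 1 ((1+u) - (u+3)) (by push_cast; ring) h'.symm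
  intro u v hne hnadj
  have hadj : (cycleGraph (k+5)).Adj u v := by
    by_contra h
    exact hnadj ((compl_adj _ _ _).mpr ⟨hne, h⟩)
  rcases (cycAdj k u v).mp hadj with h | h
  · obtain ⟨w, h1, h2⟩ := claim v u h
    exact ⟨w, h2.symm, h1.symm⟩
  · exact claim u v h

lemma pathMid (k : ℕ) : ∀ u v : Fin (k+5), u ≠ v → ¬(pathGraph (k+5))ᶜ.Adj u v →
    ∃ w, (pathGraph (k+5))ᶜ.Adj u w ∧ (pathGraph (k+5))ᶜ.Adj w v := by
  have claim : ∀ u v : Fin (k+5), u.val + 1 = v.val →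
      ∃ w, (pathGraph (k+5))ᶜ.Adj u w ∧ (pathGraph (k+5))ᶜ.Adj w v := by
    intro u v h
    rcases le_or_gt 2 u.val with hu | hu
    · refine ⟨⟨0, by omega⟩, ⟨?_, ?_⟩, ?_, ?_⟩
      · intro h'; apply_fun Fin.val at h'; simp [-Fin.val_eq_zero_iff] at h'; omega
      · rw [pathGraph_adj]; simp; omega
      · intro h'; apply_fun Fin.val at h'; simp at h'; omega
      · rw [pathGraph_adj]; simp; omega
    · refine ⟨⟨4, by omega⟩, ⟨?_, ?_⟩, ?_, ?_⟩
      · intro h'; apply_fun Fin.val at h'; simp at h'; omega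
      · rw [pathGraph_adj]; simp; omega
      · intro h'; apply_fun Fin.val at h'; simp at h'; omega
      · rw [pathGraph_adj]; simp; omega
  intro u v hne hnadj
  have hadj : (pathGraph (k+5)).Adj u v := by
    by_contra h
    exact hnadj ((compl_adj _ _ _).mpr ⟨hne, h⟩)
  rcases (pathGraph_adj).mp hadj with h | h
  · exact claim u v h
  · obtain ⟨w, h1, h2⟩ := claim v u h
    exact ⟨w, h2.symm, h1.symm⟩

theorem radioGraceful_compl_cycle_and_compl_path :
    (∀ m : ℕ, 5 ≤ m → RadioGraceful (SimpleGraph.cycleGraph m)ᶜ) ∧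
    (∀ n : ℕ, 5 ≤ n → RadioGraceful (SimpleGraph.pathGraph n)ᶜ) := by
  constructor
  · intro m hm
    obtain ⟨k, rfl⟩ : ∃ k, m = k + 5 := ⟨m - 5, by omega⟩
    apply radioGraceful_aux _ (cycMid k) (fun i => i.val + 1) (rangeSucc k)
    · intro a b h
      have h' : a.val + 1 = b.val + 1 := h
      exact Fin.ext (by omega)
    · intro u v h hadj
      have h' : u.val + 1 + 1 = v.val + 1 := h
      exact hadj.2 ((cycAdj k u v).mpr (Or.inr (finAddOne k u v (by omega))))
  · intro n hn
    obtain ⟨k, rfl⟩ : ∃ k, n = k + 5 := ⟨n - 5, by omega⟩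
    apply radioGraceful_aux _ (pathMid k) (fun i => i.val + 1) (rangeSucc k)
    · intro a b h
      have h' : a.val + 1 = b.val + 1 := h
      exact Fin.ext (by omega)
    · intro u v h hadj
      have h' : u.val + 1 + 1 = v.val + 1 := h
      exact hadj.2 (pathGraph_adj.mpr (Or.inl (by omega)))
end
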